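/- arXiv:1406.5313 — 4 statements merged into one kernel-verified Lean document; each statement's English description precedes it below -/
import Mathlib

section
/- Suppose 𝒥 is a T₀-system. Let t ↦ μ^t (t ≥ 0) be a solution of the recombination equation such that μ^t is a probability mass function on X for every t, and suppose all one-dimensional marginals of the initial condition are strictly positive: μ_i^0(a) > 0 for every i ∈ Λ and a ∈ K_i. Then for all sufficiently large t, μ^t(x) > 0 for every x ∈ X, i.e., supp μ^t = X. -/
open Finset

/-- Restriction of a word to a set of coordinates `M`. -/
def restrictW {Λ : Type*} (K : Λ → Type*) (M : Finset Λ) (x : ∀ i, K i) :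
    ∀ i : M, K i := fun i => x i

/-- Marginal of `μ` on the set of coordinates `M`. -/
def marginal {Λ : Type*} [Fintype Λ] [DecidableEq Λ] (K : Λ → Type*)
    [∀ i, Fintype (K i)] [∀ i, DecidableEq (K i)]
    (μ : (∀ i, K i) → ℝ) (M : Finset Λ) (a : ∀ i : M, K i) : ℝ :=
  ∑ x : ∀ i, K i, if restrictW K M x = a then μ x else 0

/-- One-dimensional marginal of `μ` at coordinate `i`. -/
def marg1 {Λ : Type*} [Fintype Λ] [DecidableEq Λ] (K : Λ → Type*)
    [∀ i, Fintype (K i)] [∀ i, DecidableEq (K i)]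
    (μ : (∀ i, K i) → ℝ) (i : Λ) (a : K i) : ℝ :=
  ∑ x : ∀ i, K i, if x i = a then μ x else 0

/-- `I`-recombination: the word equal to `a` on `I` and to `x` off `I`. -/
def recombW {Λ : Type*} [DecidableEq Λ] (K : Λ → Type*) (I : Finset Λ)
    (x : ∀ i, K i) (a : ∀ i : I, K i) : ∀ i, K i :=
  fun i => if h : i ∈ I then a ⟨i, h⟩ else x i

/-- Right hand side of the recombination equation. -/
def recombRHS {Λ : Type*} [Fintype Λ] [DecidableEq Λ] (K : Λ → Type*)
    [∀ i, Fintype (K i)] [∀ i, DecidableEq (K i)]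
    (𝒥 : Finset (Finset Λ))
    (φ : ∀ I : Finset Λ, (∀ i : I, K i) → (∀ i : I, K i) → ℝ)
    (μ : (∀ i, K i) → ℝ) (x : ∀ i, K i) : ℝ :=
  ∑ I ∈ 𝒥, ∑ y : ∀ i : I, K i,
    (φ I y (restrictW K I x) * marginal K μ I (restrictW K I x) * μ (recombW K I x y)
      - φ I (restrictW K I x) y * marginal K μ I y * μ x)

/-- A probability mass function on `∀ i, K i`. -/
def IsPMF {Λ : Type*} [Fintype Λ] [DecidableEq Λ] (K : Λ → Type*) [∀ i, Fintype (K i)]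
    (μ : (∀ i, K i) → ℝ) : Prop :=
  (∀ x, 0 ≤ μ x) ∧ ∑ x : ∀ i, K i, μ x = 1

/-- `𝒥`-separated measure. -/
def IsSeparated {Λ : Type*} [Fintype Λ] [DecidableEq Λ] (K : Λ → Type*)
    [∀ i, Fintype (K i)] [∀ i, DecidableEq (K i)]
    (𝒥 : Finset (Finset Λ)) (μ : (∀ i, K i) → ℝ) : Prop :=
  ∀ I ∈ 𝒥, ∀ x, μ x = marginal K μ I (restrictW K I x) * marginal K μ Iᶜ (restrictW K Iᶜ x)

/-- A `T₀`-system of frames. -/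
def IsT0 {Λ : Type*} (𝒥 : Finset (Finset Λ)) : Prop :=
  ∀ i j : Λ, i ≠ j → ∃ I ∈ 𝒥, (i ∈ I ∧ j ∉ I) ∨ (j ∈ I ∧ i ∉ I)

set_option linter.unusedSectionVars false

section helpers


variable {Λ : Type*} [Fintype Λ] [DecidableEq Λ] {K : Λ → Type*}
    [∀ i, Fintype (K i)] [∀ i, DecidableEq (K i)]

lemma marginal_nonneg {ν : (∀ i, K i) → ℝ} (hν : ∀ x, 0 ≤ ν x) (I : Finset Λ)
    (a : ∀ i : I, K i) : 0 ≤ marginal K ν I a := by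
  apply Finset.sum_nonneg
  intro x _
  split <;> simp [hν x]

lemma marginal_le_one {ν : (∀ i, K i) → ℝ} (hν : ∀ x, 0 ≤ ν x)
    (hν1 : ∑ x : ∀ i, K i, ν x = 1) (I : Finset Λ)
    (a : ∀ i : I, K i) : marginal K ν I a ≤ 1 := by
  rw [← hν1]
  apply Finset.sum_le_sum
  intro x _
  split <;> simp [hν x]

lemma le_marginal {ν : (∀ i, K i) → ℝ} (hν : ∀ x, 0 ≤ ν x) (I : Finset Λ)
    (z : ∀ i, K i) : ν z ≤ marginal K ν I (restrictW K I z) := by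
  have := Finset.single_le_sum (f := fun x => if restrictW K I x = restrictW K I z then ν x else 0)
    (fun x _ => by split <;> simp [hν x]) (Finset.mem_univ z)
  simpa [marginal] using this

lemma restrictW_recombW (I : Finset Λ) (x : ∀ i, K i) (a : ∀ i : I, K i) :
    restrictW K I (recombW K I x a) = a := by
  funext i
  simp [restrictW, recombW, i.2]

lemma recombW_eq_self (I : Finset Λ) (u x : ∀ i, K i) (h : ∀ i ∉ I, u i = x i) :
    recombW K I u (restrictW K I x) = x := by
  funext i
  by_cases hi : i ∈ I
  · simp [recombW, hi, restrictW]
  · simp [recombW, hi, h i hi]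

end helpers

section main

variable {Λ : Type*} [Fintype Λ] [DecidableEq Λ] {K : Λ → Type*}
    [∀ i, Fintype (K i)] [∀ i, DecidableEq (K i)]
    {𝒥 : Finset (Finset Λ)}
    {φ : ∀ I : Finset Λ, (∀ i : I, K i) → (∀ i : I, K i) → ℝ}

lemma recombRHS_ge (hφpos : ∀ I ∈ 𝒥, ∀ a b, 0 < φ I a b)
    {ν : (∀ i, K i) → ℝ} (hpmf : IsPMF K ν) (x : ∀ i, K i) :
    -(∑ I ∈ 𝒥, ∑ y : ∀ i : I, K i, φ I (restrictW K I x) y) * ν x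
      ≤ recombRHS K 𝒥 φ ν x := by
  have h1 : -(∑ I ∈ 𝒥, ∑ y : ∀ i : I, K i, φ I (restrictW K I x) y) * ν x
      = ∑ I ∈ 𝒥, ∑ y : ∀ i : I, K i, -(φ I (restrictW K I x) y * ν x) := by
    rw [neg_mul, Finset.sum_mul, ← Finset.sum_neg_distrib]
    congr 1; funext I
    rw [Finset.sum_mul, ← Finset.sum_neg_distrib]
  rw [h1]
  apply Finset.sum_le_sum
  intro I hI
  apply Finset.sum_le_sum
  intro y _
  have hφ1 := hφpos I hI y (restrictW K I x)
  have hφ2 := hφpos I hI (restrictW K I x) y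
  have hg : 0 ≤ φ I y (restrictW K I x) * marginal K ν I (restrictW K I x)
      * ν (recombW K I x y) :=
    mul_nonneg (mul_nonneg hφ1.le (marginal_nonneg hpmf.1 I _)) (hpmf.1 _)
  have hl : φ I (restrictW K I x) y * marginal K ν I y * ν x
      ≤ φ I (restrictW K I x) y * ν x := by
    rw [mul_assoc]
    have h2 : marginal K ν I y * ν x ≤ 1 * ν x :=
      mul_le_mul_of_nonneg_right (marginal_le_one hpmf.1 hpmf.2 I y) (hpmf.1 x)
    calc φ I (restrictW K I x) y * (marginal K ν I y * ν x)
        ≤ φ I (restrictW K I x) y * (1 * ν x) :=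
          mul_le_mul_of_nonneg_left h2 hφ2.le
      _ = φ I (restrictW K I x) y * ν x := by ring
  linarith

variable {μ : ℝ → (∀ i, K i) → ℝ}

lemma persist (hφpos : ∀ I ∈ 𝒥, ∀ a b, 0 < φ I a b)
    (hsol : ∀ x, ∀ t ∈ Set.Ici (0 : ℝ),
      HasDerivWithinAt (fun s => μ s x) (recombRHS K 𝒥 φ (μ t) x) (Set.Ici (0 : ℝ)) t)
    (hpmf : ∀ t ∈ Set.Ici (0 : ℝ), IsPMF K (μ t))
    (x : ∀ i, K i) (s : ℝ) (hs : 0 ≤ s) (hpos : 0 < μ s x)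
    (t : ℝ) (hst : s ≤ t) : 0 < μ t x := by
  set C := ∑ I ∈ 𝒥, ∑ y : ∀ i : I, K i, φ I (restrictW K I x) y with hC
  set g : ℝ → ℝ := fun r => μ r x * Real.exp (C * r) with hgdef
  have hderiv : ∀ r ∈ Set.Ici (0:ℝ), HasDerivWithinAt g
      (recombRHS K 𝒥 φ (μ r) x * Real.exp (C * r) + μ r x * (Real.exp (C * r) * (C * 1)))
      (Set.Ici 0) r := by
    intro r hr
    exact (hsol x r hr).mul (((hasDerivAt_id r).const_mul C).exp).hasDerivWithinAt
  have hnn : ∀ r ∈ Set.Ici (0:ℝ),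
      0 ≤ recombRHS K 𝒥 φ (μ r) x * Real.exp (C * r) + μ r x * (Real.exp (C * r) * (C * 1)) := by
    intro r hr
    have hb := recombRHS_ge hφpos (hpmf r hr) x
    have he : (0:ℝ) < Real.exp (C * r) := Real.exp_pos _
    nlinarith [mul_nonneg (by linarith : (0:ℝ) ≤ recombRHS K 𝒥 φ (μ r) x + C * μ r x) he.le]
  have hsub : Set.Ici s ⊆ Set.Ici (0:ℝ) := Set.Ici_subset_Ici.mpr hs
  have hmono : MonotoneOn g (Set.Ici s) := by
    apply monotoneOn_of_deriv_nonneg (convex_Ici s)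
    · exact fun r hr => ((hderiv r (hsub hr)).continuousWithinAt).mono hsub
    · intro r hr
      rw [interior_Ici] at hr
      have hr0 : (0:ℝ) < r := lt_of_le_of_lt hs hr
      exact (((hderiv r hr0.le).hasDerivAt (Ici_mem_nhds hr0)).differentiableAt).differentiableWithinAt
    · intro r hr
      rw [interior_Ici] at hr
      have hr0 : (0:ℝ) < r := lt_of_le_of_lt hs hr
      rw [((hderiv r hr0.le).hasDerivAt (Ici_mem_nhds hr0)).deriv]
      exact hnn r hr0.le
  have hgs : 0 < g s := mul_pos hpos (Real.exp_pos _)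
  have hgt : g s ≤ g t := hmono Set.self_mem_Ici hst hst
  have het : (0:ℝ) < Real.exp (C * t) := Real.exp_pos _
  by_contra h
  push_neg at h
  have : g t ≤ 0 := by
    rw [hgdef]
    exact mul_nonpos_of_nonpos_of_nonneg h het.le
  linarith

lemma ignite (hφpos : ∀ I ∈ 𝒥, ∀ a b, 0 < φ I a b)
    (hsol : ∀ x, ∀ t ∈ Set.Ici (0 : ℝ),
      HasDerivWithinAt (fun s => μ s x) (recombRHS K 𝒥 φ (μ t) x) (Set.Ici (0 : ℝ)) t)
    (hpmf : ∀ t ∈ Set.Ici (0 : ℝ), IsPMF K (μ t))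
    (u : ∀ i, K i) (s : ℝ) (hs : 0 ≤ s)
    (I : Finset Λ) (hI : I ∈ 𝒥) (b : ∀ i : I, K i)
    (hm : 0 < marginal K (μ s) I (restrictW K I u))
    (hr : 0 < μ s (recombW K I u b)) :
    ∃ t, 0 ≤ t ∧ 0 < μ t u := by
  by_cases hu : 0 < μ s u
  · exact ⟨s, hs, hu⟩
  have hu0 : μ s u = 0 := le_antisymm (not_lt.mp hu) ((hpmf s hs).1 u)
  have hd : 0 < recombRHS K 𝒥 φ (μ s) u := by
    unfold recombRHS
    simp only [hu0, mul_zero, sub_zero]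
    apply Finset.sum_pos'
    · intro J hJ
      apply Finset.sum_nonneg
      intro y _
      exact mul_nonneg (mul_nonneg (hφpos J hJ y _).le (marginal_nonneg (hpmf s hs).1 J _))
        ((hpmf s hs).1 _)
    · refine ⟨I, hI, Finset.sum_pos' (fun y _ => ?_) ⟨b, Finset.mem_univ b, ?_⟩⟩
      · exact mul_nonneg (mul_nonneg (hφpos I hI y _).le (marginal_nonneg (hpmf s hs).1 I _))
          ((hpmf s hs).1 _)
      · exact mul_pos (mul_pos (hφpos I hI b _) hm) hr
  have hds : HasDerivWithinAt (fun t => μ t u) (recombRHS K 𝒥 φ (μ s) u) (Set.Ici s) s :=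
    (hsol u s hs).mono (Set.Ici_subset_Ici.mpr hs)
  rw [hasDerivWithinAt_iff_tendsto_slope, Set.Ici_sdiff_left] at hds
  have hev : ∀ᶠ r in nhdsWithin s (Set.Ioi s), 0 < slope (fun t => μ t u) s r :=
    hds.eventually (eventually_gt_nhds hd)
  obtain ⟨r, hr0, hrs⟩ := (hev.and self_mem_nhdsWithin).exists
  have hrs' : 0 < r - s := sub_pos.mpr hrs
  rw [slope_def_field] at hr0
  have hnum : 0 < μ r u - μ s u := by
    have h2 := mul_pos hr0 hrs'
    rwa [div_mul_cancel₀ _ (ne_of_gt hrs')] at h2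
  exact ⟨r, le_trans hs hrs.le, by linarith⟩

end main

section main2

variable {Λ : Type*} [Fintype Λ] [DecidableEq Λ] {K : Λ → Type*}
    [∀ i, Fintype (K i)] [∀ i, DecidableEq (K i)]
    {𝒥 : Finset (Finset Λ)}
    {φ : ∀ I : Finset Λ, (∀ i : I, K i) → (∀ i : I, K i) → ℝ}
    {μ : ℝ → (∀ i, K i) → ℝ}

lemma closure_recomb (hφpos : ∀ I ∈ 𝒥, ∀ a b, 0 < φ I a b)
    (hsol : ∀ x, ∀ t ∈ Set.Ici (0 : ℝ),
      HasDerivWithinAt (fun s => μ s x) (recombRHS K 𝒥 φ (μ t) x) (Set.Ici (0 : ℝ)) t)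
    (hpmf : ∀ t ∈ Set.Ici (0 : ℝ), IsPMF K (μ t))
    (x y : ∀ i, K i)
    (hx : ∃ t, 0 ≤ t ∧ 0 < μ t x) (hy : ∃ t, 0 ≤ t ∧ 0 < μ t y)
    (I : Finset Λ) (hI : I ∈ 𝒥) :
    ∃ t, 0 ≤ t ∧ 0 < μ t (recombW K I x (restrictW K I y)) := by
  obtain ⟨s1, hs1, hx1⟩ := hx
  obtain ⟨s2, hs2, hy1⟩ := hy
  set s := max s1 s2 with hsdef
  have hs : (0:ℝ) ≤ s := le_trans hs1 (le_max_left _ _)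
  have hxs : 0 < μ s x := persist hφpos hsol hpmf x s1 hs1 hx1 s (le_max_left _ _)
  have hys : 0 < μ s y := persist hφpos hsol hpmf y s2 hs2 hy1 s (le_max_right _ _)
  set u := recombW K I x (restrictW K I y) with hudef
  apply ignite hφpos hsol hpmf u s hs I hI (restrictW K I x)
  · have hru : restrictW K I u = restrictW K I y := restrictW_recombW I x _
    rw [hru]
    exact lt_of_lt_of_le hys (le_marginal (hpmf s hs).1 I y)
  · have : recombW K I u (restrictW K I x) = x := by
      apply recombW_eq_self
      intro i hi
      simp [hudef, recombW, hi]
    rw [this]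
    exact hxs

lemma list_map_eq {α β : Type*} {l : List α} {f g : α → β} (h : l.map f = l.map g) :
    ∀ a ∈ l, f a = g a := by
  induction l with
  | nil => simp
  | cons a l ih =>
    simp only [List.map_cons, List.cons.injEq] at h
    intro b hb
    rcases List.mem_cons.mp hb with rfl | hb
    · exact h.1
    · exact ih h.2 b hb

lemma combineL (hφpos : ∀ I ∈ 𝒥, ∀ a b, 0 < φ I a b)
    (hsol : ∀ x, ∀ t ∈ Set.Ici (0 : ℝ),
      HasDerivWithinAt (fun s => μ s x) (recombRHS K 𝒥 φ (μ t) x) (Set.Ici (0 : ℝ)) t)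
    (hpmf : ∀ t ∈ Set.Ici (0 : ℝ), IsPMF K (μ t))
    (L : List (Finset Λ)) (hL : ∀ J ∈ L, J ∈ 𝒥)
    (g : List Bool → (∀ i, K i)) (hg : ∀ v, ∃ t, 0 ≤ t ∧ 0 < μ t (g v)) :
    ∃ t, 0 ≤ t ∧ 0 < μ t (fun i => g (L.map (fun J => decide (i ∈ J))) i) := by
  induction L generalizing g with
  | nil => simpa using hg []
  | cons I L ih =>
    have het := ih (fun J hJ => hL J (List.mem_cons_of_mem _ hJ))
      (fun v => g (true :: v)) (fun v => hg _)
    have hef := ih (fun J hJ => hL J (List.mem_cons_of_mem _ hJ))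
      (fun v => g (false :: v)) (fun v => hg _)
    have key := closure_recomb hφpos hsol hpmf _ _ hef het I (hL I List.mem_cons_self)
    have heq : recombW K I (fun i => g (false :: L.map (fun J => decide (i ∈ J))) i)
        (restrictW K I (fun i => g (true :: L.map (fun J => decide (i ∈ J))) i))
        = fun i => g (decide (i ∈ I) :: L.map (fun J => decide (i ∈ J))) i := by
      funext i
      by_cases hi : i ∈ I
      · simp [recombW, restrictW, hi]
      · simp [recombW, restrictW, hi]
    rw [heq] at key
    simpa using key

end main2

/-- if `𝒥` is a `T₀`-system and all one-dimensional marginals of the initial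
condition are strictly positive, then for all sufficiently large `t` the measure `μ^t` is
strictly positive everywhere, i.e. `supp μ^t = X`. -/
theorem full_support_eventually {Λ : Type*} [Fintype Λ] [DecidableEq Λ] [Nonempty Λ]
    (K : Λ → Type*) [∀ i, Fintype (K i)] [∀ i, DecidableEq (K i)] [∀ i, Nonempty (K i)]
    (𝒥 : Finset (Finset Λ)) (hT0 : IsT0 𝒥)
    (φ : ∀ I : Finset Λ, (∀ i : I, K i) → (∀ i : I, K i) → ℝ)
    (hφpos : ∀ I ∈ 𝒥, ∀ a b, 0 < φ I a b)
    (hφsymm : ∀ I ∈ 𝒥, ∀ a b, φ I a b = φ I b a)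
    (μ : ℝ → (∀ i, K i) → ℝ)
    (hsol : ∀ x, ∀ t ∈ Set.Ici (0 : ℝ),
      HasDerivWithinAt (fun s => μ s x) (recombRHS K 𝒥 φ (μ t) x) (Set.Ici (0 : ℝ)) t)
    (hpmf : ∀ t ∈ Set.Ici (0 : ℝ), IsPMF K (μ t))
    (hpos : ∀ i : Λ, ∀ a : K i, 0 < marg1 K (μ 0) i a) :
    ∃ T : ℝ, ∀ t ≥ T, ∀ x, 0 < μ t x := by
  classical
  -- base: every one-dimensional value is realized by some point positive at time 0
  have hbase : ∀ (i : Λ) (a : K i), ∃ z, (∃ t, 0 ≤ t ∧ 0 < μ t z) ∧ z i = a := by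
    intro i a
    have h := hpos i a
    unfold marg1 at h
    have h' : ∑ x : ∀ j, K j, (0:ℝ) < ∑ x : ∀ j, K j, (if x i = a then μ 0 x else 0) := by
      simpa using h
    obtain ⟨z, _, hz⟩ := Finset.exists_lt_of_sum_lt h'
    by_cases hzi : z i = a
    · rw [if_pos hzi] at hz
      exact ⟨z, ⟨0, le_refl _, hz⟩, hzi⟩
    · rw [if_neg hzi] at hz
      exact absurd hz (lt_irrefl 0)
  obtain ⟨z₀, hz₀, _⟩ := hbase (Classical.arbitrary Λ) (Classical.arbitrary _)
  -- every point is eventually positive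
  have hall : ∀ x, ∃ t, 0 ≤ t ∧ 0 < μ t x := by
    intro x
    set L := 𝒥.toList with hLdef
    have hLmem : ∀ J ∈ L, J ∈ 𝒥 := fun J hJ => Finset.mem_toList.mp hJ
    set σ : Λ → List Bool := fun i => L.map (fun J => decide (i ∈ J)) with hσdef
    have hσinj : Function.Injective σ := by
      intro i j hij
      by_contra hne
      obtain ⟨I, hI, hsep⟩ := hT0 i j hne
      have hIL : I ∈ L := Finset.mem_toList.mpr hI
      have heq := list_map_eq hij I hIL
      rcases hsep with ⟨h1, h2⟩ | ⟨h1, h2⟩ <;> simp [h1, h2] at heq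
    choose zf hzfA hzfeq using hbase
    set g : List Bool → (∀ i, K i) := fun v =>
      if h : ∃ i, σ i = v then zf (Classical.choose h) (x (Classical.choose h)) else z₀
      with hgdef
    have hgA : ∀ v, ∃ t, 0 ≤ t ∧ 0 < μ t (g v) := by
      intro v
      rw [hgdef]
      dsimp only
      split
      · exact hzfA _ _
      · exact hz₀
    have hcomb := combineL hφpos hsol hpmf L hLmem g hgA
    have hfx : (fun i => g (L.map (fun J => decide (i ∈ J))) i) = x := by
      funext i
      have hex : ∃ j, σ j = σ i := ⟨i, rfl⟩
      have hji : Classical.choose hex = i := hσinj (Classical.choose_spec hex)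
      have : g (L.map (fun J => decide (i ∈ J))) = zf (Classical.choose hex) (x (Classical.choose hex)) := by
        rw [hgdef]
        exact dif_pos hex
      rw [this, hji]
      exact hzfeq i (x i)
    rw [hfx] at hcomb
    exact hcomb
  choose f hf0 hfpos using hall
  have hne : (Finset.univ : Finset (∀ i, K i)).Nonempty := Finset.univ_nonempty
  refine ⟨Finset.univ.sup' hne f, fun t ht x => ?_⟩
  exact persist hφpos hsol hpmf x (f x) (hf0 x) (hfpos x) t
    (le_trans (Finset.le_sup' f (Finset.mem_univ x)) ht)
end

section
/- Along any solution of the recombination equation, every one-dimensional marginal is constant in time: if t ↦ μ^t is a solution of the recombination equation, then for every i ∈ Λ, every a ∈ K_i and all t, μ^t_i(a) = μ^0_i(a). -/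
open Finset

section Aux
set_option linter.unusedSectionVars false
variable {Λ : Type*} [Fintype Λ] [DecidableEq Λ] (K : Λ → Type*)
    [∀ i, Fintype (K i)] [∀ i, DecidableEq (K i)] (I : Finset Λ)

def glue (u : ∀ i : I, K i) (v : ∀ i : {j // j ∉ I}, K i) : ∀ i, K i :=
  fun j => if h : j ∈ I then u ⟨j, h⟩ else v ⟨j, h⟩

lemma sum_glue (f : (∀ j, K j) → ℝ) :
    ∑ x, f x = ∑ u : ∀ i : I, K i, ∑ v : ∀ i : {j // j ∉ I}, K i, f (glue K I u v) := by
  rw [← Equiv.sum_comp (Equiv.piEquivPiSubtypeProd (· ∈ I) K).symm f,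
    Fintype.sum_prod_type]
  refine Finset.sum_congr rfl fun u _ => Finset.sum_congr rfl fun v _ => ?_
  congr 1

lemma restrict_glue (u : ∀ i : I, K i) (v : ∀ i : {j // j ∉ I}, K i) :
    restrictW K I (glue K I u v) = u := by
  funext j
  simp [restrictW, glue, j.2]

lemma glue_apply_not_mem (u : ∀ i : I, K i) (v : ∀ i : {j // j ∉ I}, K i)
    {i : Λ} (h : i ∉ I) : glue K I u v i = v ⟨i, h⟩ := dif_neg h

lemma glue_apply_mem (u : ∀ i : I, K i) (v : ∀ i : {j // j ∉ I}, K i)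
    {i : Λ} (h : i ∈ I) : glue K I u v i = u ⟨i, h⟩ := dif_pos h

lemma recomb_glue (u y : ∀ i : I, K i) (v : ∀ i : {j // j ∉ I}, K i) :
    recombW K I (glue K I u v) y = glue K I y v := by
  funext j
  by_cases h : j ∈ I <;> simp [recombW, glue, h]

lemma marginal_glue (ν : (∀ i, K i) → ℝ) (u : ∀ i : I, K i) :
    marginal K ν I u = ∑ v : ∀ i : {j // j ∉ I}, K i, ν (glue K I u v) := by
  unfold marginal
  rw [sum_glue K I]
  simp only [restrict_glue]
  have h1 : ∀ u' : ∀ i : I, K i,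
      (∑ v : ∀ i : {j // j ∉ I}, K i, if u' = u then ν (glue K I u' v) else 0)
        = if u' = u then ∑ v : ∀ i : {j // j ∉ I}, K i, ν (glue K I u' v) else 0 := by
    intro u'; split <;> simp
  rw [Finset.sum_congr rfl fun u' _ => h1 u', Finset.sum_ite_eq' univ u]
  simp

end Aux

section Key
variable {Λ : Type*} [Fintype Λ] [DecidableEq Λ] (K : Λ → Type*)
    [∀ i, Fintype (K i)] [∀ i, DecidableEq (K i)]

lemma key_zero (𝒥 : Finset (Finset Λ))
    (φ : ∀ I : Finset Λ, (∀ i : I, K i) → (∀ i : I, K i) → ℝ)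
    (hφsymm : ∀ I ∈ 𝒥, ∀ a b, φ I a b = φ I b a)
    (ν : (∀ i, K i) → ℝ) (i : Λ) (a : K i) :
    ∑ x, (if x i = a then recombRHS K 𝒥 φ ν x else 0) = 0 := by
  unfold recombRHS
  have hpush : ∀ x : ∀ j, K j,
      (if x i = a then ∑ I ∈ 𝒥, ∑ y : ∀ j : I, K j,
        (φ I y (restrictW K I x) * marginal K ν I (restrictW K I x) * ν (recombW K I x y)
          - φ I (restrictW K I x) y * marginal K ν I y * ν x) else 0)
      = ∑ I ∈ 𝒥, ∑ y : ∀ j : I, K j,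
        (if x i = a then
          (φ I y (restrictW K I x) * marginal K ν I (restrictW K I x) * ν (recombW K I x y)
            - φ I (restrictW K I x) y * marginal K ν I y * ν x) else 0) := by
    intro x; split <;> simp
  rw [Finset.sum_congr rfl fun x _ => hpush x, Finset.sum_comm]
  refine Finset.sum_eq_zero fun I hI => ?_
  rw [Finset.sum_comm]
  have hglue : ∀ y : ∀ j : I, K j,
      (∑ x, (if x i = a then
        (φ I y (restrictW K I x) * marginal K ν I (restrictW K I x) * ν (recombW K I x y)
          - φ I (restrictW K I x) y * marginal K ν I y * ν x) else 0))
      = ∑ u : ∀ j : I, K j, ∑ v : ∀ j : {j // j ∉ I}, K j,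
        (if glue K I u v i = a then
          (φ I y u * marginal K ν I u * ν (glue K I y v)
            - φ I u y * marginal K ν I y * ν (glue K I u v)) else 0) := by
    intro y
    rw [sum_glue K I]
    simp only [restrict_glue, recomb_glue]
  rw [Finset.sum_congr rfl fun y _ => hglue y]
  by_cases hi : i ∈ I
  · refine Finset.sum_eq_zero fun y _ => Finset.sum_eq_zero fun u _ => ?_
    have hcond : ∀ v : ∀ j : {j // j ∉ I}, K j, glue K I u v i = u ⟨i, hi⟩ :=
      fun v => glue_apply_mem K I u v hi
    simp only [hcond]
    by_cases ha : u ⟨i, hi⟩ = a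
    · simp only [if_pos ha, Finset.sum_sub_distrib, ← Finset.mul_sum, ← marginal_glue]
      rw [hφsymm I hI u y]; ring
    · simp [ha]
  · have hcond : ∀ (u : ∀ j : I, K j) (v : ∀ j : {j // j ∉ I}, K j),
        glue K I u v i = v ⟨i, hi⟩ := fun u v => glue_apply_not_mem K I u v hi
    simp only [hcond]
    have hsplit : ∀ (c : Prop) [Decidable c] (p q : ℝ),
        (if c then p - q else 0) = (if c then p else 0) - (if c then q else 0) := by
      intros c _ p q; split <;> simp
    simp only [hsplit, Finset.sum_sub_distrib]
    rw [sub_eq_zero, Finset.sum_comm]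

end Key

/-- along any solution of the recombination equation, every one-dimensional
marginal is constant in time. -/
theorem marg1_constant {Λ : Type*} [Fintype Λ] [DecidableEq Λ] [Nonempty Λ]
    (K : Λ → Type*) [∀ i, Fintype (K i)] [∀ i, DecidableEq (K i)] [∀ i, Nonempty (K i)]
    (𝒥 : Finset (Finset Λ))
    (φ : ∀ I : Finset Λ, (∀ i : I, K i) → (∀ i : I, K i) → ℝ)
    (hφpos : ∀ I ∈ 𝒥, ∀ a b, 0 < φ I a b)
    (hφsymm : ∀ I ∈ 𝒥, ∀ a b, φ I a b = φ I b a)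
    (μ : ℝ → (∀ i, K i) → ℝ)
    (hsol : ∀ x t, HasDerivAt (fun s => μ s x) (recombRHS K 𝒥 φ (μ t) x) t) :
    ∀ i : Λ, ∀ a : K i, ∀ t : ℝ, marg1 K (μ t) i a = marg1 K (μ 0) i a := by
  intro i a t
  have hd : ∀ s : ℝ, HasDerivAt (fun r => marg1 K (μ r) i a) 0 s := by
    intro s
    have h1 : HasDerivAt (fun r => marg1 K (μ r) i a)
        (∑ x, if x i = a then recombRHS K 𝒥 φ (μ s) x else 0) s := by
      show HasDerivAt (fun r => ∑ x : ∀ j, K j, if x i = a then μ r x else 0) _ s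
      refine HasDerivAt.fun_sum fun x _ => ?_
      by_cases h : x i = a
      · simpa [h] using hsol x s
      · simpa [h] using hasDerivAt_const s (0 : ℝ)
    rwa [key_zero K 𝒥 φ hφsymm (μ s) i a] at h1
  exact is_const_of_deriv_eq_zero (fun s => (hd s).differentiableAt)
    (fun s => (hd s).deriv) t 0
end

section
/- Fix a single frame I ⊆ Λ and consider the single-frame equation dμ^t(x)/dt = Σ_{y_I} ( φ_I(y_I, x_I) μ^t_I(x_I) μ^t(x_{Λ∖I}, y_I) − φ_I(x_I, y_I) μ^t_I(y_I) μ^t(x) ). Along any solution of this equation the marginal on I is constant in time: μ^t_I(a) = μ^0_I(a) for every restriction a to I and all t. -/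
open Finset

/-- Right hand side of the single-frame recombination equation. -/
def recombRHS1 {Λ : Type*} [Fintype Λ] [DecidableEq Λ] (K : Λ → Type*)
    [∀ i, Fintype (K i)] [∀ i, DecidableEq (K i)]
    (I : Finset Λ)
    (φ : (∀ i : I, K i) → (∀ i : I, K i) → ℝ)
    (μ : (∀ i, K i) → ℝ) (x : ∀ i, K i) : ℝ :=
  ∑ y : ∀ i : I, K i,
    (φ y (restrictW K I x) * marginal K μ I (restrictW K I x) * μ (recombW K I x y)
      - φ (restrictW K I x) y * marginal K μ I y * μ x)

theorem recomb_key {Λ : Type*} [Fintype Λ] [DecidableEq Λ]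
    (K : Λ → Type*) [∀ i, Fintype (K i)] [∀ i, DecidableEq (K i)]
    (I : Finset Λ) (φ : (∀ i : I, K i) → (∀ i : I, K i) → ℝ)
    (hφsymm : ∀ a b, φ a b = φ b a)
    (ν : (∀ i, K i) → ℝ) (a : ∀ i : I, K i) :
    ∑ x : ∀ i, K i, (if restrictW K I x = a then recombRHS1 K I φ ν x else 0) = 0 := by
  rw [← Finset.sum_filter]
  have hmem : ∀ x ∈ Finset.univ.filter (fun x => restrictW K I x = a), restrictW K I x = a := by
    intro x hx; exact (Finset.mem_filter.mp hx).2
  rw [Finset.sum_congr rfl (fun x hx => by rw [recombRHS1, hmem x hx])]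
  rw [Finset.sum_comm]
  apply Finset.sum_eq_zero
  intro y _
  have h1 : ∑ x ∈ Finset.univ.filter (fun x => restrictW K I x = a), ν (recombW K I x y)
      = marginal K ν I y := by
    rw [marginal, ← Finset.sum_filter]
    apply Finset.sum_nbij' (i := fun x => recombW K I x y) (j := fun z => recombW K I z a)
    · intro x hx
      simp only [Finset.mem_filter, Finset.mem_univ, true_and]
      funext i; simp [restrictW, recombW, i.2]
    · intro z hz
      simp only [Finset.mem_filter, Finset.mem_univ, true_and]
      funext i; simp [restrictW, recombW, i.2]
    · intro x hx
      have hxa := hmem x hx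
      funext i
      simp only [recombW]
      split_ifs with h
      · rw [← hxa]; rfl
      · rfl
    · intro z hz
      have hzy : restrictW K I z = y := (Finset.mem_filter.mp hz).2
      funext i
      simp only [recombW]
      split_ifs with h
      · rw [← hzy]; rfl
      · rfl
    · intro x hx; rfl
  have h2 : ∑ x ∈ Finset.univ.filter (fun x => restrictW K I x = a), ν x
      = marginal K ν I a := by rw [marginal, ← Finset.sum_filter]
  rw [Finset.sum_sub_distrib, ← Finset.mul_sum, ← Finset.mul_sum, h1, h2, hφsymm]
  ring

/-- along any solution of the single-frame recombination equation, the marginal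
on the frame `I` is constant in time. -/
theorem marginal_constant_single_frame {Λ : Type*} [Fintype Λ] [DecidableEq Λ] [Nonempty Λ]
    (K : Λ → Type*) [∀ i, Fintype (K i)] [∀ i, DecidableEq (K i)] [∀ i, Nonempty (K i)]
    (I : Finset Λ)
    (φ : (∀ i : I, K i) → (∀ i : I, K i) → ℝ)
    (hφpos : ∀ a b, 0 < φ a b)
    (hφsymm : ∀ a b, φ a b = φ b a)
    (μ : ℝ → (∀ i, K i) → ℝ)
    (hsol : ∀ x t, HasDerivAt (fun s => μ s x) (recombRHS1 K I φ (μ t) x) t) :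
    ∀ a : (∀ i : I, K i), ∀ t : ℝ, marginal K (μ t) I a = marginal K (μ 0) I a := by
  
  intro a t
  have hF : ∀ s : ℝ, HasDerivAt (fun u => marginal K (μ u) I a) 0 s := by
    intro s
    have : HasDerivAt (fun u => marginal K (μ u) I a)
        (∑ x : ∀ i, K i, (if restrictW K I x = a then recombRHS1 K I φ (μ s) x else 0)) s := by
      simp only [marginal]
      apply HasDerivAt.fun_sum
      intro x _
      by_cases h : restrictW K I x = a
      · simpa [h] using hsol x s
      · simpa [h] using hasDerivAt_const s (0:ℝ)
    rwa [recomb_key K I φ hφsymm (μ s) a] at this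
  exact is_const_of_deriv_eq_zero (fun s => (hF s).differentiableAt)
    (fun s => (hF s).deriv) t 0
end

section
/- Let S be a nonempty finite set, μ a strictly positive probability mass function on S, and φ : S × S → ℝ a symmetric strictly positive function; define transition rates q(x, y) = φ(x, y) μ(y). Let t ↦ p^t be a solution of the Kolmogorov forward equation dp^t(x)/dt = Σ_{y∈S} ( q(y, x) p^t(y) − q(x, y) p^t(x) ) such that p^t is a strictly positive probability mass function on S for each t. Then the Kullback–Leibler divergence D(p^t ‖ μ) = Σ_{x∈S} p^t(x) ln( p^t(x)/μ(x) ) has derivative ≤ 0 at every t, and the derivative is strictly negative at any t with p^t ≠ μ. In particular μ is a fixed point of this equation. -/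
/-- for the Markov process on a finite set `S` with transition rates
`q(x,y) = φ(x,y) μ(y)` (`φ` symmetric and strictly positive, `μ` a strictly positive pmf),
the Kullback–Leibler divergence `D(p^t ‖ μ)` is nonincreasing along any strictly positive
pmf-valued solution of the forward Kolmogorov equation, with strictly negative derivative
whenever `p^t ≠ μ`; in particular `μ` is a fixed point. -/
theorem KL_decreasing {S : Type*} [Fintype S] [Nonempty S]
    (μ : S → ℝ) (hμpos : ∀ x, 0 < μ x) (hμsum : ∑ x, μ x = 1)
    (φ : S → S → ℝ) (hφpos : ∀ x y, 0 < φ x y) (hφsymm : ∀ x y, φ x y = φ y x)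
    (p : ℝ → S → ℝ)
    (hsol : ∀ x t, HasDerivAt (fun s => p s x)
      (∑ y, (φ y x * μ x * p t y - φ x y * μ y * p t x)) t)
    (hppos : ∀ t x, 0 < p t x) (hpsum : ∀ t, ∑ x, p t x = 1) :
    (∀ t, ∃ d : ℝ, d ≤ 0 ∧
        HasDerivAt (fun s => ∑ x, p s x * Real.log (p s x / μ x)) d t ∧
        (p t ≠ μ → d < 0)) ∧
      ∀ x, ∑ y, (φ y x * μ x * μ y - φ x y * μ y * μ x) = 0 := by
  constructor
  · intro t
    set q' : S → ℝ := fun x => ∑ y, (φ y x * μ x * p t y - φ x y * μ y * p t x) with hq'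
    set r : S → ℝ := fun x => p t x / μ x with hr
    set g : S → ℝ := fun x => Real.log (r x) + 1 with hg
    have hrpos : ∀ x, 0 < r x := fun x => div_pos (hppos t x) (hμpos x)
    set A : ℝ := ∑ x, ∑ y, φ x y * μ x * μ y * ((r y - r x) * g x) with hA
    have hderiv : HasDerivAt (fun s => ∑ x, p s x * Real.log (p s x / μ x))
        (∑ x, (q' x * (Real.log (p t x) - Real.log (μ x)) + p t x * (q' x / p t x))) t := by
      have hfun : (fun s => ∑ x, p s x * Real.log (p s x / μ x))
          = fun s => ∑ x, p s x * (Real.log (p s x) - Real.log (μ x)) := by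
        funext s
        exact Finset.sum_congr rfl fun x _ => by
          rw [Real.log_div (hppos s x).ne' (hμpos x).ne']
      rw [hfun]
      exact HasDerivAt.fun_sum fun x _ =>
        (hsol x t).fun_mul (((hsol x t).log (hppos t x).ne').sub_const (Real.log (μ x)))
    have hd_eq : (∑ x, (q' x * (Real.log (p t x) - Real.log (μ x)) + p t x * (q' x / p t x)))
        = A := by
      rw [hA]
      refine Finset.sum_congr rfl fun x _ => ?_
      have h1 : p t x * (q' x / p t x) = q' x := by
        rw [mul_div_assoc']
        exact mul_div_cancel_left₀ (q' x) (hppos t x).ne'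
      rw [h1, ← Real.log_div (hppos t x).ne' (hμpos x).ne']
      have h2 : q' x * Real.log (p t x / μ x) + q' x = q' x * g x := by
        simp only [hg, hr]; ring
      rw [h2, hq']
      rw [Finset.sum_mul]
      refine Finset.sum_congr rfl fun y _ => ?_
      rw [hφsymm y x]
      have hry : r y = p t y / μ y := rfl
      have hrx : r x = p t x / μ x := rfl
      rw [hry, hrx]
      field_simp [(hμpos x).ne', (hμpos y).ne']
    have hsymm2 : A = ∑ x, ∑ y, φ x y * μ x * μ y * ((r x - r y) * g y) := by
      rw [hA, Finset.sum_comm]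
      exact Finset.sum_congr rfl fun a _ => Finset.sum_congr rfl fun b _ => by
        rw [hφsymm b a]; ring
    have h2A : A + A = ∑ x, ∑ y,
        -(φ x y * μ x * μ y * ((r y - r x) * (Real.log (r y) - Real.log (r x)))) := by
      nth_rewrite 2 [hsymm2]
      rw [hA, ← Finset.sum_add_distrib]
      refine Finset.sum_congr rfl fun x _ => ?_
      rw [← Finset.sum_add_distrib]
      refine Finset.sum_congr rfl fun y _ => ?_
      simp only [hg]; ring
    have key : ∀ a b : ℝ, 0 < a → 0 < b → 0 ≤ (b - a) * (Real.log b - Real.log a) := by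
      intro a b ha hb
      rcases le_total a b with h | h
      · have := Real.log_le_log ha h
        nlinarith
      · have := Real.log_le_log hb h
        nlinarith
    have hterm_nonpos : ∀ x y : S,
        -(φ x y * μ x * μ y * ((r y - r x) * (Real.log (r y) - Real.log (r x)))) ≤ 0 := by
      intro x y
      have hc : 0 < φ x y * μ x * μ y :=
        mul_pos (mul_pos (hφpos x y) (hμpos x)) (hμpos y)
      have := key (r x) (r y) (hrpos x) (hrpos y)
      nlinarith
    have hAle : A ≤ 0 := by
      have h : A + A ≤ 0 := by
        rw [h2A]
        exact Finset.sum_nonpos fun x _ => Finset.sum_nonpos fun y _ => hterm_nonpos x y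
      linarith
    refine ⟨A, hAle, hd_eq ▸ hderiv, ?_⟩
    intro hne
    obtain ⟨x0, hx0⟩ : ∃ x0, p t x0 ≠ μ x0 := by
      by_contra h; push_neg at h; exact hne (funext h)
    obtain ⟨a, ha⟩ : ∃ a, μ a < p t a := by
      by_contra h; push_neg at h
      have hlt : ∑ x, p t x < ∑ x, μ x :=
        Finset.sum_lt_sum (fun i _ => h i) ⟨x0, Finset.mem_univ x0, lt_of_le_of_ne (h x0) hx0⟩
      rw [hμsum, hpsum t] at hlt; exact lt_irrefl 1 hlt
    obtain ⟨b, hb⟩ : ∃ b, p t b < μ b := by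
      by_contra h; push_neg at h
      have hlt : ∑ x, μ x < ∑ x, p t x :=
        Finset.sum_lt_sum (fun i _ => h i) ⟨a, Finset.mem_univ a, ha⟩
      rw [hμsum, hpsum t] at hlt; exact lt_irrefl 1 hlt
    have hab : -(φ a b * μ a * μ b * ((r b - r a) * (Real.log (r b) - Real.log (r a)))) < 0 := by
      have hc : 0 < φ a b * μ a * μ b :=
        mul_pos (mul_pos (hφpos a b) (hμpos a)) (hμpos b)
      have h1 : r b < r a := by
        have hb1 : r b < 1 := (div_lt_one (hμpos b)).mpr hb
        have ha1 : 1 < r a := (one_lt_div (hμpos a)).mpr ha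
        linarith
      have h2 : Real.log (r b) < Real.log (r a) := Real.log_lt_log (hrpos b) h1
      have h3 : 0 < (r b - r a) * (Real.log (r b) - Real.log (r a)) :=
        mul_pos_of_neg_of_neg (by linarith) (by linarith)
      nlinarith
    have h2Alt : A + A < 0 := by
      rw [h2A]
      have hstrict : (∑ y, -(φ a y * μ a * μ y *
          ((r y - r a) * (Real.log (r y) - Real.log (r a))))) < 0 := by
        have h := Finset.sum_lt_sum (g := fun _ => (0 : ℝ))
          (fun i (_ : i ∈ Finset.univ) => hterm_nonpos a i) ⟨b, Finset.mem_univ b, hab⟩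
        simpa using h
      have h := Finset.sum_lt_sum (g := fun _ => (0 : ℝ))
        (fun x (_ : x ∈ Finset.univ) =>
          Finset.sum_nonpos fun y _ => hterm_nonpos x y)
        ⟨a, Finset.mem_univ a, hstrict⟩
      simpa using h
    linarith
  · intro x
    apply Finset.sum_eq_zero
    intro y _
    rw [hφsymm y x]; ring
end
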